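/- arXiv:1805.10413 — 3 statements merged into one kernel-verified Lean document; each statement's English description precedes it below -/
import Mathlib

section
/- For any two policies π and π' in a γ-discounted infinite-horizon MDP, the difference in expected discounted cost satisfies J(π) = J(π') + (1/(1-γ)) E_{(s,t)∼d_π} E_{a∼π_s}[A_{π'}(s,a)], where A_{π'} = Q_{π'} − V_{π'} is the advantage function of π'. -/
open Finset

variable {S A : Type*} [Fintype S] [Fintype A]

/-- `stateDist P π p0 t` is the state distribution `d_{π,t}` at time `t` obtained by running
policy `π` in the MDP with transition kernel `P` from initial state distribution `p0`. -/
noncomputable def stateDist (P : S → A → S → ℝ) (π : S → A → ℝ) (p0 : S → ℝ) :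
    ℕ → S → ℝ
  | 0 => p0
  | t + 1 => fun s' => ∑ s, ∑ a, stateDist P π p0 t s * π s a * P s a s'

/-- Expected instantaneous cost at time `t` of running policy `π` starting from state `s`. -/
noncomputable def expCost (P : S → A → S → ℝ) (c : S → A → ℝ) (π : S → A → ℝ) :
    ℕ → S → ℝ
  | 0 => fun s => ∑ a, π s a * c s a
  | t + 1 => fun s => ∑ a, ∑ s', π s a * P s a s' * expCost P c π t s'

/-- The value function `V_π(s) = E_{ρ_π}[∑_t γ^t c(s_t,a_t) | s_0 = s]`. -/
noncomputable def Vfun (γ : ℝ) (P : S → A → S → ℝ) (c : S → A → ℝ) (π : S → A → ℝ)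
    (s : S) : ℝ := ∑' t : ℕ, γ ^ t * expCost P c π t s

/-- The Q-function `Q_π(s,a) = c(s,a) + γ E_{s' ∼ P(·|s,a)}[V_π(s')]`. -/
noncomputable def Qfun (γ : ℝ) (P : S → A → S → ℝ) (c : S → A → ℝ) (π : S → A → ℝ)
    (s : S) (a : A) : ℝ := c s a + γ * ∑ s', P s a s' * Vfun γ P c π s'

/-- The objective `J(π) = E_{ρ_π}[∑_{t=0}^∞ γ^t c(s_t,a_t)] = E_{s₀∼p₀}[V_π(s₀)]`. -/
noncomputable def Jfun (γ : ℝ) (P : S → A → S → ℝ) (c : S → A → ℝ) (π : S → A → ℝ)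
    (p0 : S → ℝ) : ℝ := ∑ s, p0 s * Vfun γ P c π s

lemma expCost_abs_le (P : S → A → S → ℝ) (c : S → A → ℝ) (π : S → A → ℝ)
    (hPpos : ∀ s a s', 0 ≤ P s a s') (hPsum : ∀ s a, ∑ s', P s a s' = 1)
    (hπpos : ∀ s a, 0 ≤ π s a) (hπsum : ∀ s, ∑ a, π s a = 1)
    (M : ℝ) (hM : ∀ s a, |c s a| ≤ M) :
    ∀ t s, |expCost P c π t s| ≤ M := by
  intro t
  induction t with
  | zero =>
    intro s
    calc |expCost P c π 0 s| ≤ ∑ a, |π s a * c s a| := Finset.abs_sum_le_sum_abs _ _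
    _ ≤ ∑ a, π s a * M := by
        refine Finset.sum_le_sum fun a _ => ?_
        rw [abs_mul, abs_of_nonneg (hπpos s a)]
        exact mul_le_mul_of_nonneg_left (hM s a) (hπpos s a)
    _ = M := by rw [← Finset.sum_mul, hπsum, one_mul]
  | succ t ih =>
    intro s
    calc |expCost P c π (t+1) s|
        ≤ ∑ a, |∑ s', π s a * P s a s' * expCost P c π t s'| :=
          Finset.abs_sum_le_sum_abs _ _
    _ ≤ ∑ a, ∑ s', |π s a * P s a s' * expCost P c π t s'| :=
          Finset.sum_le_sum fun a _ => Finset.abs_sum_le_sum_abs _ _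
    _ ≤ ∑ a, ∑ s', π s a * P s a s' * M := by
        refine Finset.sum_le_sum fun a _ => Finset.sum_le_sum fun s' _ => ?_
        rw [abs_mul, abs_mul, abs_of_nonneg (hπpos s a), abs_of_nonneg (hPpos s a s')]
        exact mul_le_mul_of_nonneg_left (ih s')
          (mul_nonneg (hπpos s a) (hPpos s a s'))
    _ = ∑ a, π s a * M := by
        refine Finset.sum_congr rfl fun a _ => ?_
        calc ∑ s', π s a * P s a s' * M = (π s a * M) * ∑ s', P s a s' := by
              rw [Finset.mul_sum]; exact Finset.sum_congr rfl fun s' _ => by ring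
        _ = π s a * M := by rw [hPsum, mul_one]
    _ = M := by rw [← Finset.sum_mul, hπsum, one_mul]

lemma summable_geom_bdd {γ : ℝ} (hγ0 : 0 ≤ γ) (hγ1 : γ < 1) (f : ℕ → ℝ) (M : ℝ)
    (hf : ∀ t, |f t| ≤ M) : Summable fun t => γ ^ t * f t := by
  refine Summable.of_norm_bounded (g := fun t => γ ^ t * M)
    ((summable_geometric_of_lt_one hγ0 hγ1).mul_right M) fun t => ?_
  rw [Real.norm_eq_abs, abs_mul, abs_of_nonneg (pow_nonneg hγ0 t)]
  exact mul_le_mul_of_nonneg_left (hf t) (pow_nonneg hγ0 t)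

lemma stateDist_nonneg (P : S → A → S → ℝ) (π : S → A → ℝ) (p0 : S → ℝ)
    (hPpos : ∀ s a s', 0 ≤ P s a s') (hp0pos : ∀ s, 0 ≤ p0 s)
    (hπpos : ∀ s a, 0 ≤ π s a) : ∀ t s, 0 ≤ stateDist P π p0 t s := by
  intro t
  induction t with
  | zero => exact hp0pos
  | succ t ih =>
    intro s'
    exact Finset.sum_nonneg fun s _ => Finset.sum_nonneg fun a _ =>
      mul_nonneg (mul_nonneg (ih s) (hπpos s a)) (hPpos s a s')

lemma stateDist_sum (P : S → A → S → ℝ) (π : S → A → ℝ) (p0 : S → ℝ)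
    (hPsum : ∀ s a, ∑ s', P s a s' = 1) (hp0sum : ∑ s, p0 s = 1)
    (hπsum : ∀ s, ∑ a, π s a = 1) : ∀ t, ∑ s, stateDist P π p0 t s = 1 := by
  intro t
  induction t with
  | zero => exact hp0sum
  | succ t ih =>
    calc ∑ s', ∑ s, ∑ a, stateDist P π p0 t s * π s a * P s a s'
        = ∑ s, ∑ a, ∑ s', stateDist P π p0 t s * π s a * P s a s' := by
          rw [Finset.sum_comm]
          exact Finset.sum_congr rfl fun s _ => by rw [Finset.sum_comm]
    _ = ∑ s, ∑ a, stateDist P π p0 t s * π s a := by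
          refine Finset.sum_congr rfl fun s _ => Finset.sum_congr rfl fun a _ => ?_
          rw [← Finset.mul_sum, hPsum, mul_one]
    _ = ∑ s, stateDist P π p0 t s := by
          refine Finset.sum_congr rfl fun s _ => ?_
          rw [← Finset.mul_sum, hπsum, mul_one]
    _ = 1 := ih

lemma push_lemma (P : S → A → S → ℝ) (π : S → A → ℝ) (p0 : S → ℝ) (t : ℕ) (f : S → ℝ) :
    ∑ s, stateDist P π p0 t s * (∑ a, ∑ s', π s a * P s a s' * f s')
      = ∑ s', stateDist P π p0 (t+1) s' * f s' := by
  have L : ∑ s, stateDist P π p0 t s * (∑ a, ∑ s', π s a * P s a s' * f s')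
      = ∑ s, ∑ a, ∑ s', stateDist P π p0 t s * π s a * P s a s' * f s' := by
    refine Finset.sum_congr rfl fun s _ => ?_
    rw [Finset.mul_sum]
    refine Finset.sum_congr rfl fun a _ => ?_
    rw [Finset.mul_sum]
    exact Finset.sum_congr rfl fun s' _ => by ring
  have R : ∑ s', stateDist P π p0 (t+1) s' * f s'
      = ∑ s', ∑ s, ∑ a, stateDist P π p0 t s * π s a * P s a s' * f s' := by
    refine Finset.sum_congr rfl fun s' _ => ?_
    show (∑ s, ∑ a, stateDist P π p0 t s * π s a * P s a s') * f s' = _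
    rw [Finset.sum_mul]
    exact Finset.sum_congr rfl fun s _ => by rw [Finset.sum_mul]
  rw [L, R]
  calc ∑ s, ∑ a, ∑ s', stateDist P π p0 t s * π s a * P s a s' * f s'
      = ∑ s, ∑ s', ∑ a, stateDist P π p0 t s * π s a * P s a s' * f s' :=
        Finset.sum_congr rfl fun s _ => Finset.sum_comm
  _ = ∑ s', ∑ s, ∑ a, stateDist P π p0 t s * π s a * P s a s' * f s' := Finset.sum_comm

lemma expect_shift (P : S → A → S → ℝ) (c : S → A → ℝ) (π : S → A → ℝ) (p0 : S → ℝ) :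
    ∀ (k t : ℕ), ∑ s, stateDist P π p0 t s * expCost P c π k s
      = ∑ s, stateDist P π p0 (t+k) s * expCost P c π 0 s := by
  intro k
  induction k with
  | zero => intro t; rfl
  | succ k ih =>
    intro t
    have h1 : ∑ s, stateDist P π p0 t s * expCost P c π (k+1) s
        = ∑ s', stateDist P π p0 (t+1) s' * expCost P c π k s' := by
      have := push_lemma P π p0 t (expCost P c π k)
      simpa only [expCost] using this
    have h2 : t + 1 + k = t + (k + 1) := by omega
    rw [h1, ih (t+1), h2]

noncomputable def Qfun' (γ : ℝ) (P : S → A → S → ℝ) (c : S → A → ℝ) (π : S → A → ℝ)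
    (s : S) (a : A) : ℝ := c s a + γ * ∑ s', P s a s' * Vfun γ P c π s'

lemma weighted_abs_le (w f : S → ℝ) (K : ℝ) (hw : ∀ s, 0 ≤ w s)
    (hw1 : ∑ s, w s = 1) (hf : ∀ s, |f s| ≤ K) : |∑ s, w s * f s| ≤ K := by
  calc |∑ s, w s * f s| ≤ ∑ s, |w s * f s| := Finset.abs_sum_le_sum_abs _ _
  _ ≤ ∑ s, w s * K := by
      refine Finset.sum_le_sum fun s _ => ?_
      rw [abs_mul, abs_of_nonneg (hw s)]
      exact mul_le_mul_of_nonneg_left (hf s) (hw s)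
  _ = K := by rw [← Finset.sum_mul, hw1, one_mul]

lemma Vfun_abs_le {γ : ℝ} (hγ0 : 0 ≤ γ) (hγ1 : γ < 1)
    (P : S → A → S → ℝ) (c : S → A → ℝ) (π : S → A → ℝ) (M : ℝ)
    (he : ∀ t s, |expCost P c π t s| ≤ M) (s : S) :
    |Vfun γ P c π s| ≤ (1 - γ)⁻¹ * M := by
  have hsum : Summable fun t => γ ^ t * expCost P c π t s :=
    summable_geom_bdd hγ0 hγ1 _ M fun t => he t s
  have hgeo : Summable fun t : ℕ => γ ^ t * M :=
    (summable_geometric_of_lt_one hγ0 hγ1).mul_right M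
  have hsn : Summable fun t => ‖γ ^ t * expCost P c π t s‖ := by
    simp only [Real.norm_eq_abs]; exact hsum.abs
  have h1 : |Vfun γ P c π s| ≤ ∑' t, |γ ^ t * expCost P c π t s| := by
    have := norm_tsum_le_tsum_norm hsn
    simp only [Real.norm_eq_abs] at this
    exact this
  refine h1.trans ?_
  have h2 : ∑' t, |γ ^ t * expCost P c π t s| ≤ ∑' t : ℕ, γ ^ t * M := by
    refine Summable.tsum_le_tsum (fun t => ?_) hsum.abs hgeo
    rw [abs_mul, abs_of_nonneg (pow_nonneg hγ0 t)]
    exact mul_le_mul_of_nonneg_left (he t s) (pow_nonneg hγ0 t)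
  refine h2.trans ?_
  rw [tsum_mul_right, tsum_geometric_of_lt_one hγ0 hγ1]
lemma Vfun_bellman {γ : ℝ} (P : S → A → S → ℝ) (c : S → A → ℝ) (π : S → A → ℝ)
    (hsum : ∀ s, Summable fun t => γ ^ t * expCost P c π t s) (s : S) :
    Vfun γ P c π s = expCost P c π 0 s
      + ∑ a, ∑ s', (π s a * P s a s' * γ) * Vfun γ P c π s' := by
  have h0 : Vfun γ P c π s
      = γ ^ 0 * expCost P c π 0 s + ∑' t, γ ^ (t+1) * expCost P c π (t+1) s :=
    Summable.tsum_eq_zero_add (hsum s)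
  have h1 : ∀ t, γ ^ (t+1) * expCost P c π (t+1) s
      = ∑ a, ∑ s', (π s a * P s a s' * γ) * (γ ^ t * expCost P c π t s') := by
    intro t
    show γ ^ (t+1) * (∑ a, ∑ s', π s a * P s a s' * expCost P c π t s') = _
    rw [Finset.mul_sum]
    refine Finset.sum_congr rfl fun a _ => ?_
    rw [Finset.mul_sum]
    exact Finset.sum_congr rfl fun s' _ => by ring
  have h2 : ∑' t, γ ^ (t+1) * expCost P c π (t+1) s
      = ∑ a, ∑ s', (π s a * P s a s' * γ) * Vfun γ P c π s' := by
    rw [tsum_congr h1,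
      Summable.tsum_finsetSum (f := fun a t => ∑ s', (π s a * P s a s' * γ) * (γ ^ t * expCost P c π t s'))
        (fun a _ => summable_sum fun s' _ => (hsum s').mul_left _)]
    refine Finset.sum_congr rfl fun a _ => ?_
    rw [Summable.tsum_finsetSum (f := fun s' t => (π s a * P s a s' * γ) * (γ ^ t * expCost P c π t s'))
        (fun s' _ => (hsum s').mul_left _)]
    exact Finset.sum_congr rfl fun s' _ => tsum_mul_left
  rw [h0, h2, pow_zero, one_mul]
lemma Jfun_swap {γ : ℝ} (P : S → A → S → ℝ) (c : S → A → ℝ) (π : S → A → ℝ) (p0 : S → ℝ)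
    (hsum : ∀ s, Summable fun t => γ ^ t * expCost P c π t s) :
    ∑ s, p0 s * Vfun γ P c π s = ∑' t : ℕ, γ ^ t * ∑ s, p0 s * expCost P c π t s := by
  calc ∑ s, p0 s * Vfun γ P c π s
      = ∑ s, ∑' t, p0 s * (γ ^ t * expCost P c π t s) := by
        refine Finset.sum_congr rfl fun s _ => ?_
        rw [Vfun, tsum_mul_left]
  _ = ∑' t, ∑ s, p0 s * (γ ^ t * expCost P c π t s) :=
      (Summable.tsum_finsetSum fun s _ => (hsum s).mul_left _).symm
  _ = ∑' t, γ ^ t * ∑ s, p0 s * expCost P c π t s := by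
      refine tsum_congr fun t => ?_
      rw [Finset.mul_sum]
      exact Finset.sum_congr rfl fun s _ => by ring

/-- Performance difference lemma (Kakade & Langford, 2002): for any two policies `π, π'` in a
`γ`-discounted MDP, `J(π) = J(π') + (1/(1−γ)) E_{(s,t)∼d_π} E_{a∼π_s}[A_{π'}(s,a)]`, where
`A_{π'} = Q_{π'} − V_{π'}` and `d_π(s,t) = (1−γ) γ^t d_{π,t}(s)`. -/
theorem performance_difference_lemma
    (γ : ℝ) (hγ0 : 0 < γ) (hγ1 : γ < 1)
    (P : S → A → S → ℝ) (hPpos : ∀ s a s', 0 ≤ P s a s')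
    (hPsum : ∀ s a, ∑ s', P s a s' = 1)
    (c : S → A → ℝ) (p0 : S → ℝ) (hp0pos : ∀ s, 0 ≤ p0 s) (hp0sum : ∑ s, p0 s = 1)
    (π π' : S → A → ℝ)
    (hπpos : ∀ s a, 0 ≤ π s a) (hπsum : ∀ s, ∑ a, π s a = 1)
    (hπ'pos : ∀ s a, 0 ≤ π' s a) (hπ'sum : ∀ s, ∑ a, π' s a = 1) :
    Jfun γ P c π p0 = Jfun γ P c π' p0 + 1 / (1 - γ) *
      ∑' t : ℕ, ∑ s, ((1 - γ) * γ ^ t * stateDist P π p0 t s) *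
        ∑ a, π s a * (Qfun γ P c π' s a - Vfun γ P c π' s) := by
  have hγ0' : (0:ℝ) ≤ γ := le_of_lt hγ0
  have h1γ : (0:ℝ) < 1 - γ := by linarith
  set M : ℝ := ∑ s, ∑ a, |c s a| with hMdef
  have hM : ∀ s a, |c s a| ≤ M := by
    intro s a
    have h1 : |c s a| ≤ ∑ a, |c s a| :=
      Finset.single_le_sum (f := fun a => |c s a|) (fun a _ => abs_nonneg _)
        (Finset.mem_univ a)
    have h2 : ∑ a, |c s a| ≤ M :=
      Finset.single_le_sum (f := fun s => ∑ a, |c s a|)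
        (fun s _ => Finset.sum_nonneg fun a _ => abs_nonneg _) (Finset.mem_univ s)
    exact h1.trans h2
  have heπ := expCost_abs_le P c π hPpos hPsum hπpos hπsum M hM
  have heπ' := expCost_abs_le P c π' hPpos hPsum hπ'pos hπ'sum M hM
  have hsumπ : ∀ s, Summable fun t => γ ^ t * expCost P c π t s :=
    fun s => summable_geom_bdd hγ0' hγ1 _ M fun t => heπ t s
  have hVb : ∀ s, |Vfun γ P c π' s| ≤ (1 - γ)⁻¹ * M :=
    Vfun_abs_le hγ0' hγ1 P c π' M heπ'
  have hd0 := stateDist_nonneg P π p0 hPpos hp0pos hπpos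
  have hd1 := stateDist_sum P π p0 hPsum hp0sum hπsum
  set d : ℕ → S → ℝ := stateDist P π p0 with hdd
  set V' : S → ℝ := Vfun γ P c π' with hVV
  set e0 : S → ℝ := expCost P c π 0 with he0
  set u : ℕ → ℝ := fun t => γ ^ t * ∑ s, d t s * e0 s with hu
  set F : ℕ → ℝ := fun t => γ ^ t * ∑ s, d t s * V' s with hF
  -- advantage decomposition
  have hΔ : ∀ s, ∑ a, π s a * (Qfun γ P c π' s a - V' s)
      = e0 s + ∑ a, ∑ s', (π s a * P s a s' * γ) * V' s' - V' s := by
    intro s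
    have hb : ∑ a, π s a * V' s = V' s := by rw [← Finset.sum_mul, hπsum, one_mul]
    calc ∑ a, π s a * (Qfun γ P c π' s a - V' s)
        = ∑ a, (π s a * c s a + ∑ s', (π s a * P s a s' * γ) * V' s' - π s a * V' s) := by
          refine Finset.sum_congr rfl fun a _ => ?_
          have h3 : π s a * (γ * ∑ s', P s a s' * V' s')
              = ∑ s', (π s a * P s a s' * γ) * V' s' := by
            rw [Finset.mul_sum, Finset.mul_sum]
            exact Finset.sum_congr rfl fun s' _ => by ring
          rw [Qfun, hVV, mul_sub, mul_add, ← hVV, h3]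
    _ = (∑ a, π s a * c s a) + (∑ a, ∑ s', (π s a * P s a s' * γ) * V' s')
          - ∑ a, π s a * V' s := by
        rw [Finset.sum_sub_distrib, Finset.sum_add_distrib]
    _ = e0 s + ∑ a, ∑ s', (π s a * P s a s' * γ) * V' s' - V' s := by
        rw [hb, he0]; rfl
  have hmid : ∀ t, ∑ s, d t s * (∑ a, ∑ s', (π s a * P s a s' * γ) * V' s')
      = γ * ∑ s', d (t+1) s' * V' s' := by
    intro t
    have h1 : ∀ s, ∑ a, ∑ s', (π s a * P s a s' * γ) * V' s'
        = γ * ∑ a, ∑ s', π s a * P s a s' * V' s' := by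
      intro s
      rw [Finset.mul_sum]
      refine Finset.sum_congr rfl fun a _ => ?_
      rw [Finset.mul_sum]
      exact Finset.sum_congr rfl fun s' _ => by ring
    calc ∑ s, d t s * (∑ a, ∑ s', (π s a * P s a s' * γ) * V' s')
        = γ * ∑ s, d t s * (∑ a, ∑ s', π s a * P s a s' * V' s') := by
          rw [Finset.mul_sum]
          exact Finset.sum_congr rfl fun s _ => by rw [h1]; ring
    _ = γ * ∑ s', d (t+1) s' * V' s' := by rw [hdd, push_lemma]
  have hkey : ∀ t, γ ^ t * ∑ s, d t s * (∑ a, π s a * (Qfun γ P c π' s a - V' s))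
      = u t + (F (t+1) - F t) := by
    intro t
    have h2 : ∑ s, d t s * (∑ a, π s a * (Qfun γ P c π' s a - V' s))
        = (∑ s, d t s * e0 s) + γ * (∑ s', d (t+1) s' * V' s') - ∑ s, d t s * V' s := by
      calc ∑ s, d t s * (∑ a, π s a * (Qfun γ P c π' s a - V' s))
          = ∑ s, (d t s * e0 s
              + d t s * (∑ a, ∑ s', (π s a * P s a s' * γ) * V' s') - d t s * V' s) := by
            refine Finset.sum_congr rfl fun s _ => ?_
            rw [hΔ s]; ring
      _ = (∑ s, d t s * e0 s)
            + (∑ s, d t s * (∑ a, ∑ s', (π s a * P s a s' * γ) * V' s'))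
            - ∑ s, d t s * V' s := by
          rw [Finset.sum_sub_distrib, Finset.sum_add_distrib]
      _ = _ := by rw [hmid t]
    rw [h2]
    simp only [hu, hF]
    ring
  -- bounds and summability
  have hMV : ∀ t, |∑ s, d t s * V' s| ≤ (1 - γ)⁻¹ * M := by
    intro t
    refine weighted_abs_le (d t) V' _ (hd0 t) (hd1 t) fun s => ?_
    rw [hVV]; exact hVb s
  have hMe : ∀ t, |∑ s, d t s * e0 s| ≤ M := by
    intro t
    refine weighted_abs_le (d t) e0 M (hd0 t) (hd1 t) fun s => ?_
    rw [he0]; exact heπ 0 s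
  have hu_sum : Summable u := by
    rw [hu]; exact summable_geom_bdd hγ0' hγ1 _ M hMe
  have hF_sum : Summable F := by
    rw [hF]; exact summable_geom_bdd hγ0' hγ1 _ ((1 - γ)⁻¹ * M) hMV
  have hF1_sum : Summable fun t => F (t + 1) := (summable_nat_add_iff 1).mpr hF_sum
  have hdiff_sum : Summable fun t => F (t + 1) - F t := hF1_sum.sub hF_sum
  have hFtend : Filter.Tendsto F Filter.atTop (nhds 0) := by
    have hb : ∀ t, ‖F t‖ ≤ γ ^ t * ((1 - γ)⁻¹ * M) := by
      intro t
      simp only [hF, Real.norm_eq_abs]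
      rw [abs_mul, abs_of_nonneg (pow_nonneg hγ0' t)]
      exact mul_le_mul_of_nonneg_left (hMV t) (pow_nonneg hγ0' t)
    have hg0 : Filter.Tendsto (fun t : ℕ => γ ^ t * ((1 - γ)⁻¹ * M))
        Filter.atTop (nhds 0) := by
      simpa using (tendsto_pow_atTop_nhds_zero_of_lt_one hγ0' hγ1).mul_const
        ((1 - γ)⁻¹ * M)
    exact squeeze_zero_norm hb hg0
  have htel : ∑' t, (F (t + 1) - F t) = 0 - F 0 := by
    have h1 := hdiff_sum.hasSum.tendsto_sum_nat
    have h2 : Filter.Tendsto (fun n => ∑ i ∈ Finset.range n, (F (i + 1) - F i))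
        Filter.atTop (nhds (0 - F 0)) := by
      have hps : ∀ n, ∑ i ∈ Finset.range n, (F (i + 1) - F i) = F n - F 0 :=
        fun n => Finset.sum_range_sub F n
      simp only [hps]
      exact hFtend.sub_const (F 0)
    exact tendsto_nhds_unique h1 h2
  have hJπ : Jfun γ P c π p0 = ∑' t, u t := by
    rw [Jfun, Jfun_swap P c π p0 hsumπ]
    refine tsum_congr fun t => ?_
    simp only [hu, hdd, he0]
    congr 1
    have h := expect_shift P c π p0 t 0
    rw [Nat.zero_add] at h
    rw [← h]
    exact Finset.sum_congr rfl fun s _ => rfl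
  have hJπ' : Jfun γ P c π' p0 = F 0 := by
    simp only [hF, hdd, hVV, pow_zero, one_mul, Jfun]
    exact Finset.sum_congr rfl fun s _ => rfl
  have hmain : ∑' t, γ ^ t * ∑ s, d t s * (∑ a, π s a * (Qfun γ P c π' s a - V' s))
      = Jfun γ P c π p0 - Jfun γ P c π' p0 := by
    calc ∑' t, γ ^ t * ∑ s, d t s * (∑ a, π s a * (Qfun γ P c π' s a - V' s))
        = ∑' t, (u t + (F (t + 1) - F t)) := tsum_congr hkey
    _ = (∑' t, u t) + ∑' t, (F (t + 1) - F t) := Summable.tsum_add hu_sum hdiff_sum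
    _ = Jfun γ P c π p0 + (0 - F 0) := by rw [htel, ← hJπ]
    _ = Jfun γ P c π p0 - Jfun γ P c π' p0 := by rw [hJπ']; ring
  have hstep : ∀ t : ℕ, ∑ s, ((1 - γ) * γ ^ t * d t s)
        * (∑ a, π s a * (Qfun γ P c π' s a - V' s))
      = (1 - γ) * (γ ^ t * ∑ s, d t s * (∑ a, π s a * (Qfun γ P c π' s a - V' s))) := by
    intro t
    rw [Finset.mul_sum, Finset.mul_sum]
    exact Finset.sum_congr rfl fun s _ => by ring
  rw [tsum_congr hstep, tsum_mul_left, hmain, one_div,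
    inv_mul_cancel_left₀ (ne_of_gt h1γ)]
  ring
end

section
/- Let d ≥ 1 be real and N_m, N_M be positive integers with N_M ≥ 2N_m ≥ 2. Then (d+1) Σ_{n=N_m}^{N_M} n^{d−1} / (Σ_{n=N_m}^{N_M} n^d) ≤ (16d/(3 N_M)) · exp(d/N_M). -/
open Finset Real

set_option maxHeartbeats 800000

private lemma tel1 (F : ℕ → ℝ) {a b : ℕ} (h : a ≤ b) :
    ∑ n ∈ Finset.Icc a b, (F (n + 1) - F n) = F (b + 1) - F a := by
  induction b with
  | zero =>
    interval_cases a
    simp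
  | succ b ih =>
    rcases Nat.eq_or_lt_of_le h with h' | h'
    · subst h'; simp
    · have hle : a ≤ b := Nat.lt_succ_iff.mp h'
      rw [Finset.sum_Icc_succ_top (by omega : a ≤ b + 1), ih hle]
      ring

private lemma tel2 (F : ℕ → ℝ) {a b : ℕ} (ha : 1 ≤ a) (h : a ≤ b) :
    ∑ n ∈ Finset.Icc a b, (F n - F (n - 1)) = F b - F (a - 1) := by
  induction b with
  | zero => omega
  | succ b ih =>
    rcases Nat.eq_or_lt_of_le h with h' | h'
    · subst h'; simp
    · have hle : a ≤ b := Nat.lt_succ_iff.mp h'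
      rw [Finset.sum_Icc_succ_top (by omega : a ≤ b + 1), ih hle, Nat.add_sub_cancel]
      ring

/-- For real `d ≥ 1` and positive integers `N_m, N_M` with `N_M ≥ 2 N_m ≥ 2`,
`(d+1) ∑_{n=N_m}^{N_M} n^(d−1) / ∑_{n=N_m}^{N_M} n^d ≤ (16 d / (3 N_M)) exp (d / N_M)`. -/
theorem weighted_ratio_le (d : ℝ) (hd : 1 ≤ d) (Nm NM : ℕ) (hNm : 1 ≤ Nm)
    (hNM : 2 * Nm ≤ NM) :
    (d + 1) * (∑ n ∈ Finset.Icc Nm NM, (n : ℝ) ^ (d - 1))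
        / (∑ n ∈ Finset.Icc Nm NM, (n : ℝ) ^ d)
      ≤ (16 * d / (3 * NM)) * Real.exp (d / NM) := by
  have hd0 : (0:ℝ) < d := lt_of_lt_of_le one_pos hd
  have hab : Nm ≤ NM := by omega
  have hNM1 : 1 ≤ NM := by omega
  have hNMR : (1:ℝ) ≤ (NM:ℝ) := by exact_mod_cast hNM1
  have hNMpos : (0:ℝ) < NM := by linarith
  have hNmR : (1:ℝ) ≤ (Nm:ℝ) := by exact_mod_cast hNm
  have hmem : ∀ n ∈ Finset.Icc Nm NM, (1:ℝ) ≤ (n:ℝ) := by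
    intro n hn
    rw [Finset.mem_Icc] at hn
    have : 1 ≤ n := le_trans hNm hn.1
    exact_mod_cast this
  set S1 := ∑ n ∈ Finset.Icc Nm NM, (n : ℝ) ^ (d - 1) with hS1
  set S2 := ∑ n ∈ Finset.Icc Nm NM, (n : ℝ) ^ d with hS2
  -- Step A : d * S1 ≤ (NM+1)^d - Nm^d
  have stepA : d * S1 ≤ ((NM:ℝ) + 1) ^ d - (Nm:ℝ) ^ d := by
    have key : ∀ n ∈ Finset.Icc Nm NM,
        d * (n:ℝ) ^ (d - 1) ≤ ((n:ℝ) + 1) ^ d - (n:ℝ) ^ d := by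
      intro n hn
      have hn1 : (1:ℝ) ≤ (n:ℝ) := hmem n hn
      have hn0 : (0:ℝ) < (n:ℝ) := by linarith
      have hne : (n:ℝ) ≠ 0 := ne_of_gt hn0
      have hb : (-1:ℝ) ≤ 1 / (n:ℝ) := le_trans (by norm_num : (-1:ℝ) ≤ 0) (by positivity)
      have hber := one_add_mul_self_le_rpow_one_add hb hd
      have hmul : ((n:ℝ) + 1) ^ d = (n:ℝ) ^ d * (1 + 1/n) ^ d := by
        rw [← Real.mul_rpow (le_of_lt hn0) (by positivity)]
        congr 1
        field_simp
      have hpow : (n:ℝ) ^ d * (1 + d * (1/n)) ≤ ((n:ℝ)+1) ^ d := by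
        rw [hmul]
        exact mul_le_mul_of_nonneg_left hber (Real.rpow_nonneg hn0.le d)
      have hrp : (n:ℝ) ^ d = (n:ℝ) ^ (d-1) * n := by
        rw [← Real.rpow_add_one hne]; ring_nf
      have hkey : (n:ℝ) ^ d * (1 + d * (1/n)) = (n:ℝ) ^ d + d * (n:ℝ) ^ (d-1) := by
        rw [hrp]; field_simp
      rw [hkey] at hpow
      linarith
    calc d * S1 = ∑ n ∈ Finset.Icc Nm NM, d * (n:ℝ) ^ (d - 1) := by
          rw [hS1, Finset.mul_sum]
      _ ≤ ∑ n ∈ Finset.Icc Nm NM, (((n:ℝ)+1) ^ d - (n:ℝ) ^ d) :=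
          Finset.sum_le_sum key
      _ = ((NM:ℝ)+1) ^ d - (Nm:ℝ) ^ d := by
          have := tel1 (fun n : ℕ => (n:ℝ) ^ d) hab
          simp only [Nat.cast_add, Nat.cast_one] at this
          exact this
  -- Step B : NM^(d+1) - Nm^(d+1) ≤ (d+1) * S2
  have stepB : (NM:ℝ) ^ (d+1) - (Nm:ℝ) ^ (d+1) ≤ (d + 1) * S2 := by
    have key : ∀ n ∈ Finset.Icc Nm NM,
        (n:ℝ) ^ (d+1) - ((n-1 : ℕ):ℝ) ^ (d+1) ≤ (d+1) * (n:ℝ) ^ d := by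
      intro n hn
      have hn1 : (1:ℝ) ≤ (n:ℝ) := hmem n hn
      have hn0 : (0:ℝ) < (n:ℝ) := by linarith
      have hne : (n:ℝ) ≠ 0 := ne_of_gt hn0
      have hnn : 1 ≤ n := by exact_mod_cast hn1
      have hcast : ((n - 1 : ℕ):ℝ) = (n:ℝ) - 1 := by
        rw [Nat.cast_sub hnn, Nat.cast_one]
      have hb : (-1:ℝ) ≤ -1 / (n:ℝ) := by
        rw [neg_div, neg_le_neg_iff, div_le_one hn0]; exact hn1
      have hber := one_add_mul_self_le_rpow_one_add hb (by linarith : (1:ℝ) ≤ d + 1)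
      have hnng : (0:ℝ) ≤ 1 + -1/(n:ℝ) := by
        have : (1:ℝ) + -1/n = (n - 1)/n := by field_simp; ring
        rw [this]
        apply div_nonneg (by linarith) hn0.le
      have hmul : ((n:ℝ) - 1) ^ (d+1) = (n:ℝ) ^ (d+1) * (1 + -1/n) ^ (d+1) := by
        rw [← Real.mul_rpow (le_of_lt hn0) hnng]
        congr 1
        field_simp
        ring
      have hpow : (n:ℝ) ^ (d+1) * (1 + (d+1) * (-1/n)) ≤ ((n:ℝ)-1) ^ (d+1) := by
        rw [hmul]
        exact mul_le_mul_of_nonneg_left hber (Real.rpow_nonneg hn0.le _)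
      have hrp : (n:ℝ) ^ (d+1) = (n:ℝ) ^ d * n := by
        rw [← Real.rpow_add_one hne]
      have hkey : (n:ℝ) ^ (d+1) * (1 + (d+1) * (-1/n))
          = (n:ℝ) ^ (d+1) - (d+1) * (n:ℝ) ^ d := by
        rw [hrp]; field_simp; ring
      rw [hkey] at hpow
      rw [hcast]
      linarith
    calc (NM:ℝ) ^ (d+1) - (Nm:ℝ) ^ (d+1)
        ≤ (NM:ℝ) ^ (d+1) - ((Nm - 1 : ℕ):ℝ) ^ (d+1) := by
          have hcast : ((Nm - 1 : ℕ):ℝ) = (Nm:ℝ) - 1 := by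
            rw [Nat.cast_sub hNm, Nat.cast_one]
          rw [hcast]
          have h0 : (0:ℝ) ≤ (Nm:ℝ) - 1 := by linarith
          have := Real.rpow_le_rpow h0 (by linarith : (Nm:ℝ) - 1 ≤ (Nm:ℝ))
            (by linarith : (0:ℝ) ≤ d + 1)
          linarith
      _ = ∑ n ∈ Finset.Icc Nm NM, ((n:ℝ) ^ (d+1) - ((n-1 : ℕ):ℝ) ^ (d+1)) :=
          (tel2 (fun n : ℕ => (n:ℝ) ^ (d+1)) hNm hab).symm
      _ ≤ ∑ n ∈ Finset.Icc Nm NM, (d+1) * (n:ℝ) ^ d := Finset.sum_le_sum key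
      _ = (d+1) * S2 := by rw [hS2, Finset.mul_sum]
  have hS2pos : 0 < S2 := by
    rw [hS2]
    apply Finset.sum_pos
    · intro n hn
      have := hmem n hn
      positivity
    · exact Finset.nonempty_Icc.2 hab
  -- Nm^(d+1) ≤ (1/4) NM^(d+1)
  have hNmNM : (Nm:ℝ) ^ (d+1) ≤ (1/4) * (NM:ℝ) ^ (d+1) := by
    have h2 : (2:ℝ) * Nm ≤ NM := by exact_mod_cast hNM
    have hNm0 : (0:ℝ) ≤ (Nm:ℝ) := by linarith
    have h4 : (4:ℝ) ≤ (2:ℝ) ^ (d+1) := by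
      calc (4:ℝ) = (2:ℝ) ^ (2:ℝ) := by
            rw [show ((2:ℝ) ^ (2:ℝ)) = (2:ℝ) ^ ((2:ℕ):ℝ) by norm_num,
              Real.rpow_natCast]
            norm_num
        _ ≤ (2:ℝ) ^ (d+1) :=
            Real.rpow_le_rpow_of_exponent_le (by norm_num) (by linarith)
    calc (Nm:ℝ) ^ (d+1) ≤ ((NM:ℝ)/2) ^ (d+1) :=
          Real.rpow_le_rpow hNm0 (by linarith) (by linarith)
      _ = (NM:ℝ) ^ (d+1) / (2:ℝ) ^ (d+1) :=
          Real.div_rpow hNMpos.le (by norm_num : (0:ℝ) ≤ 2) (d+1)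
      _ ≤ (NM:ℝ) ^ (d+1) / 4 :=
          div_le_div_of_nonneg_left (Real.rpow_nonneg hNMpos.le _) (by norm_num) h4
      _ = (1/4) * (NM:ℝ) ^ (d+1) := by ring
  -- (NM+1)^d ≤ NM^d * exp(d/NM)
  have hexp : ((NM:ℝ) + 1) ^ d ≤ (NM:ℝ) ^ d * Real.exp (d / NM) := by
    have hmul : ((NM:ℝ) + 1) ^ d = (NM:ℝ) ^ d * (1 + 1/NM) ^ d := by
      rw [← Real.mul_rpow hNMpos.le (by positivity)]
      congr 1; field_simp
    rw [hmul]
    apply mul_le_mul_of_nonneg_left _ (Real.rpow_nonneg hNMpos.le d)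
    have h1 : (1:ℝ) + 1/NM ≤ Real.exp (1/NM) := by
      have := Real.add_one_le_exp (1/(NM:ℝ)); linarith
    calc ((1:ℝ) + 1/NM) ^ d ≤ (Real.exp (1/NM)) ^ d :=
          Real.rpow_le_rpow (by positivity) h1 hd0.le
      _ = Real.exp (1/NM * d) := (Real.exp_mul _ d).symm
      _ = Real.exp (d / NM) := by ring_nf
  -- combine everything
  have hS2low : (3/4) * (NM:ℝ) ^ (d+1) / (d+1) ≤ S2 := by
    rw [div_le_iff₀ (by linarith : (0:ℝ) < d + 1)]
    nlinarith [stepB, hNmNM]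
  have hS1up : S1 ≤ ((NM:ℝ) + 1) ^ d / d := by
    rw [le_div_iff₀ hd0]
    have h0 : (0:ℝ) ≤ (Nm:ℝ) ^ d := Real.rpow_nonneg (by linarith) d
    nlinarith [stepA]
  rw [div_le_iff₀ hS2pos]
  have hRHS0 : 0 ≤ (16 * d / (3 * NM)) * Real.exp (d / NM) := by positivity
  have hNMd : (NM:ℝ) ^ (d + 1) = (NM:ℝ) ^ d * NM := by
    rw [Real.rpow_add hNMpos, Real.rpow_one]
  have hE : 0 < Real.exp (d / NM) := Real.exp_pos _
  have hP : 0 < (NM:ℝ) ^ d := Real.rpow_pos_of_pos hNMpos d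
  calc (d + 1) * S1 ≤ (d + 1) * (((NM:ℝ) + 1) ^ d / d) :=
        mul_le_mul_of_nonneg_left hS1up (by linarith)
    _ ≤ (d + 1) * (((NM:ℝ) ^ d * Real.exp (d / NM)) / d) := by
        gcongr
    _ ≤ (16 * d / (3 * NM)) * Real.exp (d / NM) * ((3/4) * (NM:ℝ) ^ (d+1) / (d+1)) := by
        rw [hNMd]
        have expand : (16 * d / (3 * NM)) * Real.exp (d / NM)
              * ((3/4) * ((NM:ℝ) ^ d * NM) / (d+1))
            = 4 * d * ((NM:ℝ) ^ d * Real.exp (d / NM)) / (d + 1) := by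
          field_simp
          ring
        rw [expand, ← mul_div_assoc, div_le_div_iff₀ hd0 (by linarith : (0:ℝ) < d + 1)]
        have hq : (0:ℝ) ≤ 3*d^2 - 2*d - 1 := by nlinarith
        nlinarith [mul_nonneg (mul_nonneg hP.le hE.le) hq]
    _ ≤ (16 * d / (3 * NM)) * Real.exp (d / NM) * S2 :=
        mul_le_mul_of_nonneg_left hS2low hRHS0
end

section
/- For two policies π, π_n and expert π* in a γ-discounted MDP, the policy gradient decomposes as E_{d_{π_n}}(∇_θ E_π)[A_{π_n}]|_{π=π_n} = (∇_θ E_{d_π})E_{π_n}[A_{π*}]|_{π=π_n} + E_{d_{π_n}}(∇_θ E_π)[A_{π*}]|_{π=π_n}; i.e., the AggreVaTeD imitation gradient (second term) differs from the true policy gradient by the term arising from differentiating the state distribution against the expert advantage. -/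
open Finset

/-- Decomposition of the policy gradient (end of Section 4.2 of the paper). With `D θ` the
discounted state(-time) distribution of the parametrized policy `p θ`, `An = A_{π_n}` and
`Astar = A_{π*}` the advantage functions of `π_n` and of the expert, the performance difference
lemma gives `∑_s D θ s ∑_a p θ s a An(s,a) = C + ∑_s D θ s ∑_a p θ s a Astar(s,a)` for a
constant `C`, and `E_{π_n}[A_{π_n}(s,·)] = 0`. Then the policy gradient
`E_{d_{π_n}}(∇_θ E_π)[A_{π_n}]` equals
`(∇_θ E_{d_π})E_{π_n}[A_{π*}] + E_{d_{π_n}}(∇_θ E_π)[A_{π*}]` at `π = π_n`: the AggreVaTeD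
imitation gradient (second term) differs from the true policy gradient by the term arising from
differentiating the state distribution against the expert advantage. -/
theorem policy_gradient_aggrevated_decomposition
    {E S A : Type*} [NormedAddCommGroup E] [InnerProductSpace ℝ E] [CompleteSpace E]
    [Fintype S] [Fintype A]
    (D : E → S → ℝ) (D' : S → E) (p : E → S → A → ℝ) (p' : S → A → E)
    (An Astar : S → A → ℝ) (θn : E) (C : ℝ)
    (hD : ∀ s, HasGradientAt (fun θ => D θ s) (D' s) θn)
    (hp : ∀ s a, HasGradientAt (fun θ => p θ s a) (p' s a) θn)
    (hzero : ∀ s, ∑ a, p θn s a * An s a = 0)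
    (hPDL : ∀ θ, ∑ s, D θ s * ∑ a, p θ s a * An s a
      = C + ∑ s, D θ s * ∑ a, p θ s a * Astar s a) :
    ∑ s, D θn s • ∑ a, An s a • p' s a
      = ∑ s, (∑ a, p θn s a * Astar s a) • D' s
        + ∑ s, D θn s • ∑ a, Astar s a • p' s a := by
  classical
  set T := InnerProductSpace.toDual ℝ E with hT
  have hD' : ∀ s, HasFDerivAt (fun θ => D θ s) (T (D' s) : E →L[ℝ] ℝ) θn :=
    fun s => (hD s).hasFDerivAt
  have hp' : ∀ s a, HasFDerivAt (fun θ => p θ s a) (T (p' s a) : E →L[ℝ] ℝ) θn :=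
    fun s a => (hp s a).hasFDerivAt
  have key : ∀ (w : S → A → ℝ),
      HasFDerivAt (fun θ => ∑ s, D θ s * ∑ a, p θ s a * w s a)
        (∑ s, (D θn s • (∑ a, w s a • (T (p' s a) : E →L[ℝ] ℝ))
          + (∑ a, p θn s a * w s a) • (T (D' s) : E →L[ℝ] ℝ))) θn := by
    intro w
    apply HasFDerivAt.fun_sum
    intro s _
    have hg : HasFDerivAt (fun θ => ∑ a, p θ s a * w s a)
        (∑ a, w s a • (T (p' s a) : E →L[ℝ] ℝ)) θn := by
      have := HasFDerivAt.fun_sum (fun a (_ : a ∈ Finset.univ) => ((hp' s a).mul_const (w s a)))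
      simpa [smul_comm, mul_comm] using this
    exact (hD' s).mul hg
  have h1 := key An
  have h2 := (key Astar).const_add C
  have heq : (fun θ => C + ∑ s, D θ s * ∑ a, p θ s a * Astar s a)
      = (fun θ => ∑ s, D θ s * ∑ a, p θ s a * An s a) := funext fun θ => (hPDL θ).symm
  rw [heq] at h2
  have hEq := h1.unique h2
  simp only [hzero, zero_smul, add_zero] at hEq
  apply T.injective
  simp only [map_sum, map_add, map_smul]
  rw [hEq, Finset.sum_add_distrib, add_comm]
end
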